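/- Let H1, H2 be Hilbert spaces, V : H1 → H2 a bounded operator, and D1, D2 self-adjoint operators on H1, H2 respectively. If the map k ↦ e^{ikD2} V e^{-ikD1} from ℝ to bounded operators is differentiable at 0 in the operator norm topology with derivative iW, then V maps the domain of D1 into the domain of D2, and for every ξ in dom(D1) we have D2(Vξ) = Wξ + V(D1ξ); in particular D2V − VD1 extends to a bounded operator on H1. -/
import Mathlib


open scoped InnerProductSpace

/-- If `k ↦ e^{ikD₂} V e^{-ikD₁}` is differentiable at `0` in operator norm
with derivative `i • W`, then `V` maps `dom D₁` into `dom D₂` and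
`D₂ (V ξ) = W ξ + V (D₁ ξ)` for all `ξ ∈ dom D₁` (so `D₂V - VD₁` has bounded extension `W`).
The self-adjoint operators `D₁, D₂` are given through their strongly continuous unitary
groups `G₁, G₂`, of which they are the generators in the sense of Stone's theorem. -/
theorem commutator_bounded_of_differentiable
    {H1 H2 : Type*} [NormedAddCommGroup H1] [InnerProductSpace ℂ H1] [CompleteSpace H1]
    [NormedAddCommGroup H2] [InnerProductSpace ℂ H2] [CompleteSpace H2]
    (V : H1 →L[ℂ] H2)
    (D1 : H1 →ₗ.[ℂ] H1) (D2 : H2 →ₗ.[ℂ] H2)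
    (hD1 : IsSelfAdjoint D1) (hD2 : IsSelfAdjoint D2)
    (G1 : ℝ → (H1 →L[ℂ] H1)) (G2 : ℝ → (H2 →L[ℂ] H2))
    (hG1grp : ∀ s t : ℝ, G1 (s + t) = (G1 s).comp (G1 t)) (hG1zero : G1 0 = 1)
    (hG2grp : ∀ s t : ℝ, G2 (s + t) = (G2 s).comp (G2 t)) (hG2zero : G2 0 = 1)
    (hG1iso : ∀ (k : ℝ) (x : H1), ‖G1 k x‖ = ‖x‖)
    (hG2iso : ∀ (k : ℝ) (x : H2), ‖G2 k x‖ = ‖x‖)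
    (hG1cont : ∀ x : H1, Continuous fun k : ℝ => G1 k x)
    (hG2cont : ∀ x : H2, Continuous fun k : ℝ => G2 k x)
    -- `D₁` is the generator of `G₁`: membership in the domain is equivalent to
    -- differentiability of the orbit, and the derivative is `i • D₁ x`.
    (hD1gen : ∀ x : H1, x ∈ D1.domain ↔ ∃ y : H1, HasDerivAt (fun k : ℝ => G1 k x) y 0)
    (hD1der : ∀ x : D1.domain,
      HasDerivAt (fun k : ℝ => G1 k (x : H1)) (Complex.I • D1 x) 0)
    (hD2gen : ∀ x : H2, x ∈ D2.domain ↔ ∃ y : H2, HasDerivAt (fun k : ℝ => G2 k x) y 0)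
    (hD2der : ∀ x : D2.domain,
      HasDerivAt (fun k : ℝ => G2 k (x : H2)) (Complex.I • D2 x) 0)
    (W : H1 →L[ℂ] H2)
    (hW : HasDerivAt (fun k : ℝ => (G2 k).comp (V.comp (G1 (-k)))) (Complex.I • W) 0) :
    ∀ x : D1.domain, ∃ h : V (x : H1) ∈ D2.domain,
      D2 ⟨V (x : H1), h⟩ = W (x : H1) + V (D1 x) := by
  intro x
  have hx := hD1der x
  have key : HasDerivAt (fun k : ℝ => G2 k (V (x : H1)))
      (Complex.I • (W (x : H1) + V (D1 x))) 0 := by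
    set L := ContinuousLinearMap.restrictScalarsL ℂ H1 H2 ℝ ℝ with hL
    have hW' : HasDerivAt (fun k : ℝ => L ((G2 k).comp (V.comp (G1 (-k)))))
        (L (Complex.I • W)) 0 := L.hasFDerivAt.comp_hasDerivAt 0 hW
    have h := hW'.clm_apply hx
    have heq : (fun k : ℝ => (L ((G2 k).comp (V.comp (G1 (-k))))) (G1 k (x : H1)))
        = fun k : ℝ => G2 k (V (x : H1)) := by
      funext k
      simp only [hL, ContinuousLinearMap.coe_restrict_scalarsL',
        ContinuousLinearMap.coe_restrictScalars', ContinuousLinearMap.comp_apply]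
      congr 1
      have h1 : G1 (-k) (G1 k (x : H1)) = G1 0 (x : H1) := by
        rw [show (0:ℝ) = -k + k by ring, hG1grp]; rfl
      rw [h1, hG1zero]; rfl
    rw [heq] at h
    convert h using 1
    simp [hL, ContinuousLinearMap.coe_restrict_scalarsL',
      ContinuousLinearMap.coe_restrictScalars', hG1zero, hG2zero, smul_add]
  have hmem : V (x : H1) ∈ D2.domain := (hD2gen _).mpr ⟨_, key⟩
  refine ⟨hmem, ?_⟩
  have h2 := hD2der ⟨V (x : H1), hmem⟩
  have := key.unique h2
  exact smul_right_injective H2 Complex.I_ne_zero this.symm
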